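/- Let (X₁,ρ₁) and (X₂,ρ₂) be probability measure spaces, let m₁, m₂ be positive integers, let f_1, …, f_{m₁} be an orthonormal family of (measurable) functions in L²(X₁,ρ₁), and let e_1, …, e_{m₂} be an orthonormal family in L²(X₂,ρ₂). Let ω be a measurable subset of X₁ × X₂, and for x₁ ∈ X₁ let ω_{x₁} = {x₂ : (x₁,x₂) ∈ ω}. Let c₂ : X₁ → [0,∞) be a bounded measurable function such that for every x₁ ∈ X₁ and all complex coefficients b_1, …, b_{m₂}: ∫_{ω_{x₁}} |Σ_l b_l e_l(x₂)|² dρ₂(x₂) ≥ c₂(x₁) Σ_l |b_l|². Let c₁ ≥ 0 be such that for all complex coefficients b_1, …, b_{m₁}: ∫_{X₁} c₂(x₁) |Σ_k b_k f_k(x₁)|² dρ₁(x₁) ≥ c₁ Σ_k |b_k|². Then for all complex coefficients (a_{kl})_{1≤k≤m₁, 1≤l≤m₂}: ∫_ω |Σ_{k,l} a_{kl} f_k(x₁) e_l(x₂)|² d(ρ₁⊗ρ₂)(x₁,x₂) ≥ c₁ Σ_{k,l} |a_{kl}|². -/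

import Mathlib

open MeasureTheory

/-- The core Fubini computation: if the vertical traces of `ω` observe the orthonormal
family `e` with constant `c₂(x₁)`, and the weight `c₂` observes the orthonormal family
`f` with constant `c₁`, then `ω` observes the tensor products `f ⊗ e` with constant
`c₁`. -/
theorem fubini_observability
    {X₁ X₂ : Type*} [MeasurableSpace X₁] [MeasurableSpace X₂]
    (ρ₁ : Measure X₁) (ρ₂ : Measure X₂)
    [IsProbabilityMeasure ρ₁] [IsProbabilityMeasure ρ₂]
    (m₁ m₂ : ℕ) (hm₁ : 0 < m₁) (hm₂ : 0 < m₂)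
    (f : Fin m₁ → X₁ → ℂ) (e : Fin m₂ → X₂ → ℂ)
    (hfmeas : ∀ k, Measurable (f k)) (hemeas : ∀ l, Measurable (e l))
    (hfL2 : ∀ k, MemLp (f k) 2 ρ₁) (heL2 : ∀ l, MemLp (e l) 2 ρ₂)
    (hforth : ∀ k k' : Fin m₁,
      ∫ x, f k x * (starRingEnd ℂ) (f k' x) ∂ρ₁ = if k = k' then 1 else 0)
    (heorth : ∀ l l' : Fin m₂,
      ∫ x, e l x * (starRingEnd ℂ) (e l' x) ∂ρ₂ = if l = l' then 1 else 0)
    (ω : Set (X₁ × X₂)) (hω : MeasurableSet ω)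
    (c₂ : X₁ → ℝ) (hc₂meas : Measurable c₂) (hc₂nonneg : ∀ x₁, 0 ≤ c₂ x₁)
    (hc₂bdd : ∃ C : ℝ, ∀ x₁, c₂ x₁ ≤ C)
    (hobs₂ : ∀ x₁ : X₁, ∀ b : Fin m₂ → ℂ,
      ∫ x₂ in {x₂ : X₂ | (x₁, x₂) ∈ ω}, ‖∑ l, b l * e l x₂‖ ^ 2 ∂ρ₂ ≥
        c₂ x₁ * ∑ l, ‖b l‖ ^ 2)
    (c₁ : ℝ) (hc₁nonneg : 0 ≤ c₁)
    (hobs₁ : ∀ b : Fin m₁ → ℂ,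
      ∫ x₁, c₂ x₁ * ‖∑ k, b k * f k x₁‖ ^ 2 ∂ρ₁ ≥ c₁ * ∑ k, ‖b k‖ ^ 2) :
    ∀ a : Fin m₁ → Fin m₂ → ℂ,
      ∫ p in ω, ‖∑ k, ∑ l, a k l * f k p.1 * e l p.2‖ ^ 2 ∂(ρ₁.prod ρ₂) ≥
        c₁ * ∑ k, ∑ l, ‖a k l‖ ^ 2 := by

  intro a
  set h : Fin m₂ → X₁ → ℂ := fun l x₁ => ∑ k, a k l * f k x₁ with hh
  set S : X₁ × X₂ → ℂ := fun p => ∑ l, h l p.1 * e l p.2 with hS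
  -- pointwise identity between the two ways of writing the double sum
  have hsum_eq : ∀ p : X₁ × X₂, ∑ k, ∑ l, a k l * f k p.1 * e l p.2 = S p := by
    intro p
    rw [Finset.sum_comm]
    refine Finset.sum_congr rfl fun l _ => ?_
    simp only [hh, Finset.sum_mul]
  -- basic facts about h
  have hmeas_h : ∀ l, Measurable (h l) :=
    fun l => Finset.measurable_sum _ fun k _ => (hfmeas k).const_mul (a k l)
  have hL2_h : ∀ l, MemLp (h l) 2 ρ₁ := by
    intro l
    have h1 := memLp_finsetSum' (μ := ρ₁) (f := fun k x₁ => a k l * f k x₁) Finset.univ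
      (fun k _ => (hfL2 k).const_mul (a k l))
    have h2 : (∑ k : Fin m₁, fun x₁ => a k l * f k x₁) = h l := by
      funext x₁; simp [hh]
    rwa [h2] at h1
  have hint_h : ∀ l, Integrable (fun x₁ => ‖h l x₁‖ ^ 2) ρ₁ := fun l =>
    (memLp_two_iff_integrable_sq_norm (hL2_h l).aestronglyMeasurable).mp (hL2_h l)
  have hint_e : ∀ l, Integrable (fun x₂ => ‖e l x₂‖ ^ 2) ρ₂ := fun l =>
    (memLp_two_iff_integrable_sq_norm (heL2 l).aestronglyMeasurable).mp (heL2 l)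
  -- S is in L² of the product, so ‖S‖² is integrable
  have hS_meas : Measurable S :=
    Finset.measurable_sum _ fun l _ =>
      ((hmeas_h l).comp measurable_fst).mul ((hemeas l).comp measurable_snd)
  have hterm_L2 : ∀ l, MemLp (fun p : X₁ × X₂ => h l p.1 * e l p.2) 2 (ρ₁.prod ρ₂) := by
    intro l
    have hmeas : Measurable fun p : X₁ × X₂ => h l p.1 * e l p.2 :=
      ((hmeas_h l).comp measurable_fst).mul ((hemeas l).comp measurable_snd)
    rw [memLp_two_iff_integrable_sq_norm hmeas.aestronglyMeasurable]
    exact ((hint_h l).mul_prod (hint_e l)).congr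
      (Filter.Eventually.of_forall fun p => by simp [norm_mul, mul_pow])
  have hS_L2 : MemLp S 2 (ρ₁.prod ρ₂) := by
    have h1 := memLp_finsetSum' (μ := ρ₁.prod ρ₂)
      (f := fun l (p : X₁ × X₂) => h l p.1 * e l p.2) Finset.univ (fun l _ => hterm_L2 l)
    have h2 : (∑ l : Fin m₂, fun p : X₁ × X₂ => h l p.1 * e l p.2) = S := by
      funext p; simp [hS]
    rwa [h2] at h1
  have hg_int : Integrable (fun p => ‖S p‖ ^ 2) (ρ₁.prod ρ₂) :=
    (memLp_two_iff_integrable_sq_norm hS_L2.aestronglyMeasurable).mp hS_L2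
  have hind_int : Integrable (ω.indicator fun p => ‖S p‖ ^ 2) (ρ₁.prod ρ₂) :=
    hg_int.indicator hω
  -- bound on c₂
  obtain ⟨C, hC⟩ := hc₂bdd
  have hc₂norm : ∀ x, ‖c₂ x‖ ≤ C := fun x => by
    rw [Real.norm_of_nonneg (hc₂nonneg x)]; exact hC x
  -- integrability of the intermediate lower bound
  have hGint : ∀ l, Integrable (fun x₁ => c₂ x₁ * ‖h l x₁‖ ^ 2) ρ₁ := fun l =>
    (hint_h l).bdd_mul hc₂meas.aestronglyMeasurable (Filter.Eventually.of_forall hc₂norm)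
  have hGint' : Integrable (fun x₁ => c₂ x₁ * ∑ l, ‖h l x₁‖ ^ 2) ρ₁ :=
    (integrable_finset_sum _ fun l _ => hint_h l).bdd_mul
      hc₂meas.aestronglyMeasurable (Filter.Eventually.of_forall hc₂norm)
  -- slice rewriting
  have hslice : ∀ x₁, (fun x₂ => ω.indicator (fun p => ‖S p‖ ^ 2) (x₁, x₂)) =
      fun x₂ => ({x₂ : X₂ | (x₁, x₂) ∈ ω}).indicator
        (fun x₂ => ‖S (x₁, x₂)‖ ^ 2) x₂ := fun x₁ => rfl
  -- main chain
  calc ∫ p in ω, ‖∑ k, ∑ l, a k l * f k p.1 * e l p.2‖ ^ 2 ∂(ρ₁.prod ρ₂)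
      = ∫ p in ω, ‖S p‖ ^ 2 ∂(ρ₁.prod ρ₂) := by
        exact setIntegral_congr_fun hω fun p _ => by rw [hsum_eq p]
    _ = ∫ p, ω.indicator (fun p => ‖S p‖ ^ 2) p ∂(ρ₁.prod ρ₂) :=
        (integral_indicator hω).symm
    _ = ∫ x₁, ∫ x₂, ω.indicator (fun p => ‖S p‖ ^ 2) (x₁, x₂) ∂ρ₂ ∂ρ₁ :=
        integral_prod _ hind_int
    _ ≥ ∫ x₁, c₂ x₁ * ∑ l, ‖h l x₁‖ ^ 2 ∂ρ₁ := by
        refine integral_mono hGint' hind_int.integral_prod_left fun x₁ => ?_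
        have : ∫ x₂, ω.indicator (fun p => ‖S p‖ ^ 2) (x₁, x₂) ∂ρ₂
            = ∫ x₂ in {x₂ : X₂ | (x₁, x₂) ∈ ω}, ‖S (x₁, x₂)‖ ^ 2 ∂ρ₂ := by
          rw [show (fun x₂ => ω.indicator (fun p => ‖S p‖ ^ 2) (x₁, x₂)) =
            ({x₂ : X₂ | (x₁, x₂) ∈ ω}).indicator (fun x₂ => ‖S (x₁, x₂)‖ ^ 2) from rfl]
          exact integral_indicator (measurable_prodMk_left hω)
        rw [this]
        have := hobs₂ x₁ (fun l => h l x₁)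
        simpa [hS] using this
    _ = ∑ l, ∫ x₁, c₂ x₁ * ‖h l x₁‖ ^ 2 ∂ρ₁ := by
        rw [← integral_finset_sum _ fun l _ => hGint l]
        exact integral_congr_ae (Filter.Eventually.of_forall fun x₁ => by
          simp [Finset.mul_sum])
    _ ≥ ∑ l, c₁ * ∑ k, ‖a k l‖ ^ 2 := by
        refine Finset.sum_le_sum fun l _ => ?_
        simpa [hh] using hobs₁ (fun k => a k l)
    _ = c₁ * ∑ k, ∑ l, ‖a k l‖ ^ 2 := by
        rw [← Finset.mul_sum, Finset.sum_comm]
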